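/- Let N ⊆ ℝ^ν be a compact subset for which there exist δ_N > 0 and a Lipschitz retraction Π : {y ∈ ℝ^ν : dist(y, N) ≤ δ_N} → N with Π|_N = id. Let j ≥ 1. Then for every α > 0 there exists β > 0 such that for every continuous map F : Q^j → N whose restriction to ∂Q^j is α-Lipschitz, there exists a β-Lipschitz map G : Q^j → N with G|_{∂Q^j} = F|_{∂Q^j}. -/

import Mathlib

open scoped NNReal

noncomputable def supNorm {j : ℕ} (x : EuclideanSpace ℝ (Fin j)) : ℝ :=
  ‖(WithLp.equiv 2 (Fin j → ℝ)) x‖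

lemma coord_le_norm {j : ℕ} (x : EuclideanSpace ℝ (Fin j)) (i : Fin j) : |x i| ≤ ‖x‖ := by
  rw [EuclideanSpace.norm_eq]
  calc |x i| = √(|x i| ^ 2) := by rw [Real.sqrt_sq_eq_abs, abs_abs]
  _ ≤ _ := by
      apply Real.sqrt_le_sqrt
      have := Finset.single_le_sum (f := fun i => ‖x i‖ ^ 2) (fun i _ => by positivity)
        (Finset.mem_univ i)
      simpa [Real.norm_eq_abs] using this

lemma supNorm_nonneg {j : ℕ} (x : EuclideanSpace ℝ (Fin j)) : 0 ≤ supNorm x := norm_nonneg _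

lemma supNorm_le_norm {j : ℕ} (x : EuclideanSpace ℝ (Fin j)) : supNorm x ≤ ‖x‖ := by
  unfold supNorm
  apply pi_norm_le_iff_of_nonneg (norm_nonneg x) |>.2
  intro i
  simpa [Real.norm_eq_abs] using coord_le_norm x i

lemma coord_le_supNorm {j : ℕ} (x : EuclideanSpace ℝ (Fin j)) (i : Fin j) :
    |x i| ≤ supNorm x := by
  simpa [supNorm, Real.norm_eq_abs] using norm_le_pi_norm ((WithLp.equiv 2 (Fin j → ℝ)) x) i

lemma supNorm_smul {j : ℕ} (c : ℝ) (x : EuclideanSpace ℝ (Fin j)) :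
    supNorm (c • x) = |c| * supNorm x := by
  unfold supNorm
  rw [show (WithLp.equiv 2 (Fin j → ℝ)) (c • x) = c • (WithLp.equiv 2 (Fin j → ℝ)) x from rfl, norm_smul, Real.norm_eq_abs]

lemma supNorm_sub_le {j : ℕ} (x y : EuclideanSpace ℝ (Fin j)) :
    |supNorm x - supNorm y| ≤ ‖x - y‖ :=
  le_trans (by
    simpa [supNorm, WithLp.ofLp_sub] using
      abs_norm_sub_norm_le ((WithLp.equiv 2 (Fin j → ℝ)) x) ((WithLp.equiv 2 (Fin j → ℝ)) y))
    (supNorm_le_norm _)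

lemma norm_le_card {j : ℕ} (x : EuclideanSpace ℝ (Fin j)) (hx : supNorm x ≤ 1) :
    ‖x‖ ≤ (j : ℝ) + 1 := by
  rw [EuclideanSpace.norm_eq]
  have h1 : ∑ i, ‖x i‖ ^ 2 ≤ (j : ℝ) := by
    calc ∑ i, ‖x i‖ ^ 2 ≤ ∑ _i : Fin j, (1:ℝ) := by
          apply Finset.sum_le_sum
          intro i _
          have h := (coord_le_supNorm x i).trans hx
          have := abs_nonneg (x i)
          nlinarith [Real.norm_eq_abs (x i)]
      _ = (j : ℝ) := by simp
  calc √(∑ i, ‖x i‖ ^ 2) ≤ √(j : ℝ) := Real.sqrt_le_sqrt h1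
    _ ≤ √(((j:ℝ)+1)^2) := by
        apply Real.sqrt_le_sqrt
        have h2 : (0:ℝ) ≤ (j:ℝ) := by positivity
        nlinarith
    _ = (j : ℝ) + 1 := Real.sqrt_sq (by positivity)

lemma lipschitzWith_supNorm {j : ℕ} : LipschitzWith 1 (supNorm (j := j)) := by
  apply LipschitzWith.of_dist_le_mul
  intro x y
  rw [Real.dist_eq, dist_eq_norm]
  simpa using supNorm_sub_le x y

abbrev Cube (j : ℕ) := {x : EuclideanSpace ℝ (Fin j) // supNorm x ≤ 1}

lemma isCompact_cube (j : ℕ) : IsCompact {x : EuclideanSpace ℝ (Fin j) | supNorm x ≤ 1} := by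
  apply Metric.isCompact_of_isClosed_isBounded
  · exact isClosed_le (lipschitzWith_supNorm.continuous) continuous_const
  · apply (Metric.isBounded_closedBall (x := (0 : EuclideanSpace ℝ (Fin j))) (r := (j:ℝ)+1)).subset
    intro x hx
    simpa [Metric.mem_closedBall, dist_eq_norm] using norm_le_card x hx

instance (j : ℕ) : CompactSpace (Cube j) :=
  isCompact_iff_compactSpace.1 (isCompact_cube j)

def Sph (j : ℕ) : Set (Cube j) := {x | supNorm (x : EuclideanSpace ℝ (Fin j)) = 1}

lemma isCompact_sph (j : ℕ) : IsCompact (Sph j) := by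
  apply IsClosed.isCompact
  exact isClosed_eq (lipschitzWith_supNorm.continuous.comp continuous_subtype_val) continuous_const

/-- helper to produce `LipschitzWith` from real constants -/
lemma lipOfReal {X Y : Type*} [PseudoMetricSpace X] [PseudoMetricSpace Y] {f : X → Y} {c : ℝ}
    (h : ∀ x y, dist (f x) (f y) ≤ c * dist x y) : LipschitzWith (Real.toNNReal c) f := by
  apply LipschitzWith.of_dist_le_mul
  intro x y
  exact le_trans (h x y) (mul_le_mul_of_nonneg_right (Real.le_coe_toNNReal c) dist_nonneg)

lemma lipOnOfReal {X Y : Type*} [PseudoMetricSpace X] [PseudoMetricSpace Y] {f : X → Y} {c : ℝ}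
    {s : Set X} (h : ∀ x ∈ s, ∀ y ∈ s, dist (f x) (f y) ≤ c * dist x y) :
    LipschitzOnWith (Real.toNNReal c) f s := by
  apply LipschitzOnWith.of_dist_le_mul
  intro x hx y hy
  exact le_trans (h x hx y hy) (mul_le_mul_of_nonneg_right (Real.le_coe_toNNReal c) dist_nonneg)

section Sig
variable {j : ℕ}

noncomputable def rr (x : Cube j) : ℝ := supNorm (x : EuclideanSpace ℝ (Fin j))

lemma rr_nonneg (x : Cube j) : 0 ≤ rr x := supNorm_nonneg _
lemma rr_le_one (x : Cube j) : rr x ≤ 1 := x.2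
lemma rr_dist (x y : Cube j) : |rr x - rr y| ≤ dist x y := by
  rw [Subtype.dist_eq, dist_eq_norm]
  exact supNorm_sub_le _ _

noncomputable def mm (x : Cube j) : ℝ := max (rr x) (1/2)

lemma mm_ge (x : Cube j) : 1/2 ≤ mm x := le_max_right _ _
lemma mm_pos (x : Cube j) : 0 < mm x := lt_of_lt_of_le (by norm_num) (mm_ge x)
lemma mm_le_one (x : Cube j) : mm x ≤ 1 := max_le (rr_le_one x) (by norm_num)
lemma rr_le_mm (x : Cube j) : rr x ≤ mm x := le_max_left _ _
lemma mm_dist (x y : Cube j) : |mm x - mm y| ≤ dist x y :=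
  le_trans (abs_max_sub_max_le_abs _ _ _) (rr_dist x y)

noncomputable def sig (x : Cube j) : Cube j :=
  ⟨(mm x)⁻¹ • (x : EuclideanSpace ℝ (Fin j)), by
    rw [supNorm_smul, abs_of_pos (inv_pos.2 (mm_pos x))]
    rw [inv_mul_le_iff₀ (mm_pos x), mul_one]
    exact rr_le_mm x⟩

lemma sig_mem_sph {x : Cube j} (hx : 1/2 ≤ rr x) : sig x ∈ Sph j := by
  have hx0 : 0 < rr x := lt_of_lt_of_le (by norm_num) hx
  have hm : mm x = rr x := max_eq_left hx
  show supNorm ((mm x)⁻¹ • (x : EuclideanSpace ℝ (Fin j))) = 1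
  rw [supNorm_smul, abs_of_pos (inv_pos.2 (mm_pos x)), hm]
  show (rr x)⁻¹ * rr x = 1
  field_simp [ne_of_gt hx0]

lemma sig_eq_self {x : Cube j} (hx : x ∈ Sph j) : sig x = x := by
  have : rr x = 1 := hx
  apply Subtype.ext
  show (mm x)⁻¹ • _ = _
  rw [show mm x = 1 by rw [mm, this]; norm_num]
  simp

lemma inv_sub_inv_bound {a b : ℝ} (ha : 1/2 ≤ a) (hb : 1/2 ≤ b) :
    |a⁻¹ - b⁻¹| ≤ 4 * |a - b| := by
  have ha0 : 0 < a := by linarith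
  have hb0 : 0 < b := by linarith
  have h : a⁻¹ - b⁻¹ = (b - a) / (a * b) := by field_simp
  rw [h, abs_div, abs_of_pos (by positivity : (0:ℝ) < a * b)]
  rw [div_le_iff₀ (by positivity)]
  have h4 : 1/4 ≤ a * b := by nlinarith
  have := abs_sub_comm a b
  calc |b - a| = |a - b| := abs_sub_comm b a
    _ = |a - b| * 1 := (mul_one _).symm
    _ ≤ 4 * |a - b| * (a * b) := by nlinarith [abs_nonneg (a - b)]

lemma sig_lip (x y : Cube j) :
    dist (sig x) (sig y) ≤ (2 + 4 * ((j:ℝ)+1)) * dist x y := by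
  have hd : dist (sig x) (sig y)
      = ‖(mm x)⁻¹ • (x : EuclideanSpace ℝ (Fin j)) - (mm y)⁻¹ • (y : EuclideanSpace ℝ (Fin j))‖ := by
    rw [Subtype.dist_eq, dist_eq_norm]; rfl
  rw [hd]
  have key : (mm x)⁻¹ • (x : EuclideanSpace ℝ (Fin j)) - (mm y)⁻¹ • (y : EuclideanSpace ℝ (Fin j))
      = (mm x)⁻¹ • ((x : EuclideanSpace ℝ (Fin j)) - (y : EuclideanSpace ℝ (Fin j)))
        + ((mm x)⁻¹ - (mm y)⁻¹) • (y : EuclideanSpace ℝ (Fin j)) := by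
    rw [smul_sub, sub_smul]; abel
  rw [key]
  have h1 : ‖(mm x)⁻¹ • ((x : EuclideanSpace ℝ (Fin j)) - (y : EuclideanSpace ℝ (Fin j)))‖
      ≤ 2 * dist x y := by
    rw [norm_smul, Real.norm_eq_abs, abs_of_pos (inv_pos.2 (mm_pos x))]
    have : (mm x)⁻¹ ≤ 2 := by
      rw [inv_le_comm₀ (mm_pos x) (by norm_num)]
      calc (2:ℝ)⁻¹ = 1/2 := by norm_num
        _ ≤ mm x := mm_ge x
    have hxy : ‖(x : EuclideanSpace ℝ (Fin j)) - (y : EuclideanSpace ℝ (Fin j))‖ = dist x y := by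
      rw [Subtype.dist_eq, dist_eq_norm]
    rw [hxy]
    exact mul_le_mul_of_nonneg_right this dist_nonneg
  have h2 : ‖((mm x)⁻¹ - (mm y)⁻¹) • (y : EuclideanSpace ℝ (Fin j))‖
      ≤ 4 * ((j:ℝ)+1) * dist x y := by
    rw [norm_smul, Real.norm_eq_abs]
    calc |(mm x)⁻¹ - (mm y)⁻¹| * ‖(y : EuclideanSpace ℝ (Fin j))‖
        ≤ (4 * |mm x - mm y|) * ((j:ℝ)+1) := by
          apply mul_le_mul (inv_sub_inv_bound (mm_ge x) (mm_ge y)) (norm_le_card _ y.2)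
            (norm_nonneg _) (by positivity)
      _ ≤ (4 * dist x y) * ((j:ℝ)+1) := by
          have := mm_dist x y
          nlinarith [dist_nonneg (x := x) (y := y)]
      _ = 4 * ((j:ℝ)+1) * dist x y := by ring
  calc ‖_ + _‖ ≤ _ + _ := norm_add_le _ _
    _ ≤ 2 * dist x y + 4 * ((j:ℝ)+1) * dist x y := add_le_add h1 h2
    _ = (2 + 4 * ((j:ℝ)+1)) * dist x y := by ring

end Sig

section Blend
variable {ν j : ℕ}

lemma blend {N : Set (EuclideanSpace ℝ (Fin ν))}
    {δ : ℝ} (hδ : 0 < δ) {Pi' : EuclideanSpace ℝ (Fin ν) → EuclideanSpace ℝ (Fin ν)}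
    {K : ℝ≥0} (hPilip : LipschitzOnWith K Pi' {y | Metric.infDist y N ≤ δ})
    (hPimaps : Set.MapsTo Pi' {y | Metric.infDist y N ≤ δ} N)
    (hPiid : Set.EqOn Pi' id N)
    (α L : ℝ≥0) (g : Cube j → EuclideanSpace ℝ (Fin ν)) (hg : LipschitzWith L g)
    (hgN : ∀ x, g x ∈ N)
    (F : Cube j → EuclideanSpace ℝ (Fin ν))
    (hFN : ∀ x ∈ Sph j, F x ∈ N)
    (hFlip : LipschitzOnWith α F (Sph j))
    (hclose : ∀ x ∈ Sph j, dist (F x) (g x) ≤ δ) :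
    ∃ G : Cube j → EuclideanSpace ℝ (Fin ν),
      LipschitzWith (Real.toNNReal
        ((K:ℝ) * ((L:ℝ) + (2*δ + ((α:ℝ)+(L:ℝ)) * (2 + 4*((j:ℝ)+1)))))) G ∧
      (∀ x, G x ∈ N) ∧ Set.EqOn G F (Sph j) := by
  classical
  set cσ : ℝ := 2 + 4*((j:ℝ)+1) with hcσ
  set θ : Cube j → ℝ := fun x => max (2 * rr x - 1) 0 with hθ
  set v : Cube j → EuclideanSpace ℝ (Fin ν) := fun x => F (sig x) - g (sig x) with hv
  set W : Cube j → EuclideanSpace ℝ (Fin ν) := fun x => θ x • v x with hW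
  have θ_nonneg : ∀ x, 0 ≤ θ x := fun x => le_max_right _ _
  have θ_le_one : ∀ x, θ x ≤ 1 := by
    intro x
    have := rr_le_one x
    simp only [hθ, max_le_iff]
    constructor <;> linarith
  have θ_lip : ∀ x y, |θ x - θ y| ≤ 2 * dist x y := by
    intro x y
    have h1 : |(2 * rr x - 1) - (2 * rr y - 1)| ≤ 2 * dist x y := by
      have := rr_dist x y
      rw [show (2 * rr x - 1) - (2 * rr y - 1) = 2 * (rr x - rr y) by ring, abs_mul]
      rw [abs_of_nonneg (by norm_num : (0:ℝ) ≤ 2)]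
      linarith
    calc |θ x - θ y| ≤ |(2 * rr x - 1) - (2 * rr y - 1)| := abs_max_sub_max_le_abs _ _ _
      _ ≤ 2 * dist x y := h1
  have θ_zero : ∀ x, rr x < 1/2 → θ x = 0 := by
    intro x hx
    simp only [hθ, max_eq_right_iff]
    linarith
  have v_bound : ∀ x, 1/2 ≤ rr x → ‖v x‖ ≤ δ := by
    intro x hx
    have := hclose (sig x) (sig_mem_sph hx)
    rwa [dist_eq_norm] at this
  have v_lip : ∀ x y, 1/2 ≤ rr x → 1/2 ≤ rr y →
      ‖v x - v y‖ ≤ ((α:ℝ)+(L:ℝ)) * cσ * dist x y := by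
    intro x y hx hy
    have hsx := sig_mem_sph hx
    have hsy := sig_mem_sph hy
    have h1 : ‖F (sig x) - F (sig y)‖ ≤ (α:ℝ) * (cσ * dist x y) := by
      rw [← dist_eq_norm]
      calc dist (F (sig x)) (F (sig y)) ≤ (α:ℝ) * dist (sig x) (sig y) :=
            hFlip.dist_le_mul _ hsx _ hsy
        _ ≤ (α:ℝ) * (cσ * dist x y) :=
            mul_le_mul_of_nonneg_left (sig_lip x y) (NNReal.coe_nonneg α)
    have h2 : ‖g (sig x) - g (sig y)‖ ≤ (L:ℝ) * (cσ * dist x y) := by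
      rw [← dist_eq_norm]
      calc dist (g (sig x)) (g (sig y)) ≤ (L:ℝ) * dist (sig x) (sig y) := hg.dist_le_mul _ _
        _ ≤ (L:ℝ) * (cσ * dist x y) :=
            mul_le_mul_of_nonneg_left (sig_lip x y) (NNReal.coe_nonneg L)
    calc ‖v x - v y‖ = ‖(F (sig x) - F (sig y)) - (g (sig x) - g (sig y))‖ := by
          simp only [hv]; congr 1; abel
      _ ≤ ‖F (sig x) - F (sig y)‖ + ‖g (sig x) - g (sig y)‖ := norm_sub_le _ _
      _ ≤ (α:ℝ) * (cσ * dist x y) + (L:ℝ) * (cσ * dist x y) := add_le_add h1 h2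
      _ = ((α:ℝ)+(L:ℝ)) * cσ * dist x y := by ring
  -- Lipschitz bound for W
  have W_lip : ∀ x y, ‖W x - W y‖ ≤ (2*δ + ((α:ℝ)+(L:ℝ)) * cσ) * dist x y := by
    have key : ∀ x y, rr y ≤ rr x → ‖W x - W y‖ ≤ (2*δ + ((α:ℝ)+(L:ℝ)) * cσ) * dist x y := by
      intro x y hyx
      rcases lt_or_ge (rr x) (1/2) with hx | hx
      · have hy : rr y < 1/2 := lt_of_le_of_lt hyx hx
        simp only [hW, θ_zero x hx, θ_zero y hy, zero_smul, sub_zero, norm_zero]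
        have h1 : 0 ≤ ((α:ℝ)+(L:ℝ)) * cσ := by positivity
        have := dist_nonneg (x := x) (y := y)
        nlinarith
      · rcases lt_or_ge (rr y) (1/2) with hy | hy
        · -- W y = 0
          have hWy : W y = 0 := by simp [hW, θ_zero y hy]
          rw [hWy, sub_zero]
          have : ‖W x‖ ≤ θ x * δ := by
            simp only [hW, norm_smul, Real.norm_eq_abs, abs_of_nonneg (θ_nonneg x)]
            exact mul_le_mul_of_nonneg_left (v_bound x hx) (θ_nonneg x)
          have hθx : θ x ≤ 2 * dist x y := by
            have := θ_lip x y
            rw [θ_zero y hy] at this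
            rw [sub_zero] at this
            calc θ x ≤ |θ x| := le_abs_self _
              _ ≤ 2 * dist x y := this
          have h1 : 0 ≤ ((α:ℝ)+(L:ℝ)) * cσ := by positivity
          have hd := dist_nonneg (x := x) (y := y)
          nlinarith
        · -- both ≥ 1/2
          have hsplit : W x - W y = (θ x - θ y) • v x + θ y • (v x - v y) := by
            simp only [hW, smul_sub, sub_smul]; abel
          rw [hsplit]
          have h1 : ‖(θ x - θ y) • v x‖ ≤ 2 * dist x y * δ := by
            rw [norm_smul, Real.norm_eq_abs]
            calc |θ x - θ y| * ‖v x‖ ≤ (2 * dist x y) * δ :=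
                mul_le_mul (θ_lip x y) (v_bound x hx) (norm_nonneg _)
                  (by positivity)
              _ = 2 * dist x y * δ := by ring
          have h2 : ‖θ y • (v x - v y)‖ ≤ ((α:ℝ)+(L:ℝ)) * cσ * dist x y := by
            rw [norm_smul, Real.norm_eq_abs, abs_of_nonneg (θ_nonneg y)]
            calc θ y * ‖v x - v y‖ ≤ 1 * ‖v x - v y‖ :=
                  mul_le_mul_of_nonneg_right (θ_le_one y) (norm_nonneg _)
              _ = ‖v x - v y‖ := one_mul _
              _ ≤ ((α:ℝ)+(L:ℝ)) * cσ * dist x y := v_lip x y hx hy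
          calc ‖_ + _‖ ≤ _ + _ := norm_add_le _ _
            _ ≤ 2 * dist x y * δ + ((α:ℝ)+(L:ℝ)) * cσ * dist x y := add_le_add h1 h2
            _ = (2*δ + ((α:ℝ)+(L:ℝ)) * cσ) * dist x y := by ring
    intro x y
    rcases le_total (rr y) (rr x) with h | h
    · exact key x y h
    · rw [norm_sub_rev, dist_comm]
      exact key y x h
  -- membership of g x + W x in the domain of Pi'
  have W_norm : ∀ x, ‖W x‖ ≤ δ := by
    intro x
    rcases lt_or_ge (rr x) (1/2) with hx | hx
    · simp [hW, θ_zero x hx, le_of_lt hδ]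
    · simp only [hW, norm_smul, Real.norm_eq_abs, abs_of_nonneg (θ_nonneg x)]
      calc θ x * ‖v x‖ ≤ 1 * δ :=
          mul_le_mul (θ_le_one x) (v_bound x hx) (norm_nonneg _) zero_le_one
        _ = δ := one_mul _
  have hmem : ∀ x, g x + W x ∈ {y | Metric.infDist y N ≤ δ} := by
    intro x
    have h1 : Metric.infDist (g x + W x) N ≤ dist (g x + W x) (g x) :=
      Metric.infDist_le_dist_of_mem (hgN x)
    have h2 : dist (g x + W x) (g x) = ‖W x‖ := by
      rw [dist_eq_norm]; congr 1; abel
    exact le_trans h1 (h2 ▸ W_norm x)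
  refine ⟨fun x => Pi' (g x + W x), ?_, ?_, ?_⟩
  · apply lipOfReal
    intro x y
    calc dist (Pi' (g x + W x)) (Pi' (g y + W y))
        ≤ (K:ℝ) * dist (g x + W x) (g y + W y) := hPilip.dist_le_mul _ (hmem x) _ (hmem y)
      _ ≤ (K:ℝ) * (((L:ℝ) + (2*δ + ((α:ℝ)+(L:ℝ)) * cσ)) * dist x y) := by
          apply mul_le_mul_of_nonneg_left _ (NNReal.coe_nonneg K)
          calc dist (g x + W x) (g y + W y) = ‖(g x - g y) + (W x - W y)‖ := by
                rw [dist_eq_norm]; congr 1; abel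
            _ ≤ ‖g x - g y‖ + ‖W x - W y‖ := norm_add_le _ _
            _ ≤ (L:ℝ) * dist x y + (2*δ + ((α:ℝ)+(L:ℝ)) * cσ) * dist x y := by
                apply add_le_add _ (W_lip x y)
                rw [← dist_eq_norm]
                exact hg.dist_le_mul _ _
            _ = ((L:ℝ) + (2*δ + ((α:ℝ)+(L:ℝ)) * cσ)) * dist x y := by ring
      _ = (K:ℝ) * ((L:ℝ) + (2*δ + ((α:ℝ)+(L:ℝ)) * cσ)) * dist x y := by ring
  · intro x
    exact hPimaps (hmem x)
  · intro x hx
    have hrr : rr x = 1 := hx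
    have hθx : θ x = 1 := by
      simp only [hθ, hrr]
      norm_num
    have hsig : sig x = x := sig_eq_self hx
    have : g x + W x = F x := by
      simp only [hW, hv, hθx, hsig, one_smul]
      abel
    show Pi' (g x + W x) = F x
    rw [this]
    exact hPiid (hFN x hx)

section Smooth
variable {ν j : ℕ}

lemma supNorm_zero : supNorm (0 : EuclideanSpace ℝ (Fin j)) = 0 := by
  simp [supNorm]

instance : Nonempty (Cube j) := ⟨⟨0, by rw [supNorm_zero]; norm_num⟩⟩

lemma smooth_approx (F : Cube j → EuclideanSpace ℝ (Fin ν)) (hF : Continuous F)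
    {R : ℝ} (hR : ∀ x, ‖F x‖ ≤ R) {ε : ℝ} (hε : 0 < ε) :
    ∃ (g : Cube j → EuclideanSpace ℝ (Fin ν)) (L : ℝ≥0),
      LipschitzWith L g ∧ ∀ x, dist (g x) (F x) ≤ ε := by
  classical
  have hR0 : 0 ≤ R := le_trans (norm_nonneg _) (hR (Classical.arbitrary _))
  -- uniform continuity
  obtain ⟨h, hh, hmod⟩ := Metric.uniformContinuous_iff.mp
    (CompactSpace.uniformContinuous_of_continuous hF) ε hε
  -- finite cover
  obtain ⟨t, -, htf, hcov⟩ := (isCompact_univ (X := Cube j)).finite_cover_balls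
    (show (0:ℝ) < h/2 by linarith)
  set T : Finset (Cube j) := htf.toFinset with hT
  have hcov' : ∀ x : Cube j, ∃ k ∈ T, dist x k < h/2 := by
    intro x
    have := hcov (Set.mem_univ x)
    simp only [Set.mem_iUnion] at this
    obtain ⟨k, hk, hxk⟩ := this
    exact ⟨k, htf.mem_toFinset.2 hk, by simpa [Metric.mem_ball] using hxk⟩
  set ψ : Cube j → Cube j → ℝ := fun k x => max (h - dist x k) 0 with hψ
  have ψ_nonneg : ∀ k x, 0 ≤ ψ k x := fun k x => le_max_right _ _
  have ψ_lip : ∀ k x y, |ψ k x - ψ k y| ≤ dist x y := by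
    intro k x y
    calc |ψ k x - ψ k y| ≤ |(h - dist x k) - (h - dist y k)| := abs_max_sub_max_le_abs _ _ _
      _ = |dist y k - dist x k| := by congr 1; ring
      _ ≤ dist y x := abs_dist_sub_le _ _ _
      _ = dist x y := dist_comm _ _
  have ψ_pos_imp : ∀ k x, 0 < ψ k x → dist (F k) (F x) ≤ ε := by
    intro k x hpos
    have : dist x k < h := by
      by_contra hc
      push_neg at hc
      have : ψ k x = 0 := by simp only [hψ, max_eq_right_iff]; linarith
      rw [this] at hpos; exact lt_irrefl _ hpos
    exact le_of_lt (hmod (by rwa [dist_comm]))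
  set s : Cube j → ℝ := fun x => ∑ k ∈ T, ψ k x with hs
  have s_lb : ∀ x, h/2 ≤ s x := by
    intro x
    obtain ⟨k, hk, hxk⟩ := hcov' x
    have h1 : h/2 ≤ ψ k x := by
      simp only [hψ, le_max_iff]
      left; linarith
    calc h/2 ≤ ψ k x := h1
      _ ≤ s x := Finset.single_le_sum (fun i _ => ψ_nonneg i x) hk
  have s_pos : ∀ x, 0 < s x := fun x => lt_of_lt_of_le (by linarith) (s_lb x)
  have s_lip : ∀ x y, |s x - s y| ≤ (T.card : ℝ) * dist x y := by
    intro x y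
    calc |s x - s y| = |∑ k ∈ T, (ψ k x - ψ k y)| := by rw [hs]; congr 1; rw [Finset.sum_sub_distrib]
      _ ≤ ∑ k ∈ T, |ψ k x - ψ k y| := Finset.abs_sum_le_sum_abs _ _
      _ ≤ ∑ _k ∈ T, dist x y := Finset.sum_le_sum (fun k _ => ψ_lip k x y)
      _ = (T.card : ℝ) * dist x y := by rw [Finset.sum_const, nsmul_eq_mul]
  set V : Cube j → EuclideanSpace ℝ (Fin ν) := fun x => ∑ k ∈ T, ψ k x • F k with hV
  have V_lip : ∀ x y, ‖V x - V y‖ ≤ (T.card : ℝ) * R * dist x y := by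
    intro x y
    calc ‖V x - V y‖ = ‖∑ k ∈ T, (ψ k x - ψ k y) • F k‖ := by
          rw [hV]
          congr 1
          rw [← Finset.sum_sub_distrib]
          congr 1; funext k; rw [sub_smul]
      _ ≤ ∑ k ∈ T, ‖(ψ k x - ψ k y) • F k‖ := norm_sum_le _ _
      _ ≤ ∑ _k ∈ T, dist x y * R := by
          apply Finset.sum_le_sum
          intro k _
          rw [norm_smul, Real.norm_eq_abs]
          exact mul_le_mul (ψ_lip k x y) (hR k) (norm_nonneg _) dist_nonneg
      _ = (T.card : ℝ) * R * dist x y := by rw [Finset.sum_const, nsmul_eq_mul]; ring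
  have V_bound : ∀ x, ‖V x‖ ≤ s x * R := by
    intro x
    calc ‖V x‖ ≤ ∑ k ∈ T, ‖ψ k x • F k‖ := norm_sum_le _ _
      _ ≤ ∑ k ∈ T, ψ k x * R := by
          apply Finset.sum_le_sum
          intro k _
          rw [norm_smul, Real.norm_eq_abs, abs_of_nonneg (ψ_nonneg k x)]
          exact mul_le_mul_of_nonneg_left (hR k) (ψ_nonneg k x)
      _ = s x * R := by rw [hs, Finset.sum_mul]
  set g : Cube j → EuclideanSpace ℝ (Fin ν) := fun x => (s x)⁻¹ • V x with hg
  refine ⟨g, Real.toNNReal ((2/h) * ((T.card:ℝ) * R) + (2/h) * ((T.card:ℝ) * R)), lipOfReal ?_, ?_⟩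
  · intro x y
    have hsx := s_pos x
    have hsy := s_pos y
    have hinv : (s x)⁻¹ ≤ 2/h := by
      rw [inv_le_comm₀ hsx (by positivity)]
      calc (2/h)⁻¹ = h/2 := by field_simp
        _ ≤ s x := s_lb x
    have hd : dist (g x) (g y) = ‖(s x)⁻¹ • V x - (s y)⁻¹ • V y‖ := dist_eq_norm _ _
    rw [hd]
    have key : (s x)⁻¹ • V x - (s y)⁻¹ • V y
        = (s x)⁻¹ • (V x - V y) + ((s x)⁻¹ - (s y)⁻¹) • V y := by
      rw [smul_sub, sub_smul]; abel
    rw [key]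
    have h1 : ‖(s x)⁻¹ • (V x - V y)‖ ≤ (2/h) * ((T.card:ℝ) * R) * dist x y := by
      rw [norm_smul, Real.norm_eq_abs, abs_of_pos (inv_pos.2 hsx)]
      calc (s x)⁻¹ * ‖V x - V y‖ ≤ (2/h) * ((T.card : ℝ) * R * dist x y) :=
            mul_le_mul hinv (V_lip x y) (norm_nonneg _) (by positivity)
        _ = (2/h) * ((T.card:ℝ) * R) * dist x y := by ring
    have h2 : ‖((s x)⁻¹ - (s y)⁻¹) • V y‖ ≤ (2/h) * ((T.card:ℝ) * R) * dist x y := by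
      rw [norm_smul, Real.norm_eq_abs]
      have hss : |(s x)⁻¹ - (s y)⁻¹| = |s x - s y| / (s x * s y) := by
        rw [inv_sub_inv (ne_of_gt hsx) (ne_of_gt hsy), abs_div,
          abs_of_pos (mul_pos hsx hsy), abs_sub_comm]
      calc |(s x)⁻¹ - (s y)⁻¹| * ‖V y‖ ≤ (|s x - s y| / (s x * s y)) * (s y * R) := by
            rw [hss]
            exact mul_le_mul_of_nonneg_left (V_bound y) (by positivity)
        _ = (|s x - s y| / s x) * R := by field_simp
        _ ≤ (((T.card : ℝ) * dist x y) * (2/h)) * R := by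
            apply mul_le_mul_of_nonneg_right _ hR0
            rw [div_eq_mul_inv]
            apply mul_le_mul (s_lip x y) hinv (by positivity) (by positivity)
        _ = (2/h) * ((T.card:ℝ) * R) * dist x y := by ring
    calc ‖_ + _‖ ≤ _ + _ := norm_add_le _ _
      _ ≤ (2/h) * ((T.card:ℝ) * R) * dist x y + (2/h) * ((T.card:ℝ) * R) * dist x y :=
          add_le_add h1 h2
      _ = ((2/h) * ((T.card:ℝ) * R) + (2/h) * ((T.card:ℝ) * R)) * dist x y := by ring
  · intro x
    have hsx := s_pos x
    have hkey : g x - F x = (s x)⁻¹ • ∑ k ∈ T, ψ k x • (F k - F x) := by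
      have h1 : ∑ k ∈ T, ψ k x • (F k - F x) = V x - s x • F x := by
        rw [hV, hs, Finset.sum_smul, ← Finset.sum_sub_distrib]
        congr 1; funext k; rw [smul_sub]
      rw [h1, smul_sub, smul_smul, inv_mul_cancel₀ (ne_of_gt hsx), one_smul, hg]
    rw [dist_eq_norm, hkey, norm_smul, Real.norm_eq_abs, abs_of_pos (inv_pos.2 hsx)]
    have h2 : ‖∑ k ∈ T, ψ k x • (F k - F x)‖ ≤ s x * ε := by
      calc ‖∑ k ∈ T, ψ k x • (F k - F x)‖ ≤ ∑ k ∈ T, ‖ψ k x • (F k - F x)‖ := norm_sum_le _ _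
        _ ≤ ∑ k ∈ T, ψ k x * ε := by
            apply Finset.sum_le_sum
            intro k _
            rw [norm_smul, Real.norm_eq_abs, abs_of_nonneg (ψ_nonneg k x)]
            rcases eq_or_lt_of_le (ψ_nonneg k x) with heq | hlt
            · rw [← heq]; simp
            · apply mul_le_mul_of_nonneg_left _ (ψ_nonneg k x)
              rw [← dist_eq_norm]
              exact ψ_pos_imp k x hlt
        _ = s x * ε := by rw [hs, Finset.sum_mul]
    calc (s x)⁻¹ * ‖∑ k ∈ T, ψ k x • (F k - F x)‖ ≤ (s x)⁻¹ * (s x * ε) :=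
          mul_le_mul_of_nonneg_left h2 (by positivity)
      _ = ε := by field_simp

end Smooth

section ExistsExt
variable {ν j : ℕ}

lemma exists_lip_ext {N : Set (EuclideanSpace ℝ (Fin ν))} (hN : IsCompact N)
    {δ : ℝ} (hδ : 0 < δ) {Pi' : EuclideanSpace ℝ (Fin ν) → EuclideanSpace ℝ (Fin ν)}
    {K : ℝ≥0} (hPilip : LipschitzOnWith K Pi' {y | Metric.infDist y N ≤ δ})
    (hPimaps : Set.MapsTo Pi' {y | Metric.infDist y N ≤ δ} N)
    (hPiid : Set.EqOn Pi' id N)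
    (α : ℝ≥0) (F : Cube j → EuclideanSpace ℝ (Fin ν)) (hFc : Continuous F)
    (hFN : ∀ x, F x ∈ N) (hFlip : LipschitzOnWith α F (Sph j)) :
    ∃ (L : ℝ≥0) (g : Cube j → EuclideanSpace ℝ (Fin ν)),
      LipschitzWith L g ∧ (∀ x, g x ∈ N) ∧ Set.EqOn g F (Sph j) := by
  obtain ⟨R, -, hR⟩ := hN.isBounded.exists_pos_norm_le
  set ε : ℝ := δ / ((K:ℝ) + 1) with hε
  have hε0 : 0 < ε := by positivity
  have hεδ : ε ≤ δ := by
    rw [hε, div_le_iff₀ (by positivity)]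
    nlinarith [NNReal.coe_nonneg K]
  have hKε : (K:ℝ) * ε ≤ δ := by
    rw [hε, ← mul_div_assoc, div_le_iff₀ (by positivity : (0:ℝ) < (K:ℝ)+1)]
    nlinarith [NNReal.coe_nonneg K, le_of_lt hδ]
  obtain ⟨g₀, L₀, hg₀, hg₀F⟩ := smooth_approx F hFc (fun x => hR _ (hFN x)) hε0
  have hmem : ∀ x, g₀ x ∈ {y | Metric.infDist y N ≤ δ} := by
    intro x
    exact le_trans (le_trans (Metric.infDist_le_dist_of_mem (hFN x)) (hg₀F x)) hεδ
  have hFmem : ∀ x : Cube j, F x ∈ {y | Metric.infDist y N ≤ δ} := by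
    intro x
    have : Metric.infDist (F x) N = 0 := Metric.infDist_zero_of_mem (hFN x)
    simp [Set.mem_setOf_eq, this, le_of_lt hδ]
  set g₁ : Cube j → EuclideanSpace ℝ (Fin ν) := fun x => Pi' (g₀ x) with hg₁
  have hg₁lip : ∀ x y, dist (g₁ x) (g₁ y) ≤ ((K:ℝ) * (L₀:ℝ)) * dist x y := by
    intro x y
    calc dist (g₁ x) (g₁ y) ≤ (K:ℝ) * dist (g₀ x) (g₀ y) :=
          hPilip.dist_le_mul _ (hmem x) _ (hmem y)
      _ ≤ (K:ℝ) * ((L₀:ℝ) * dist x y) :=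
          mul_le_mul_of_nonneg_left (hg₀.dist_le_mul _ _) (NNReal.coe_nonneg K)
      _ = ((K:ℝ) * (L₀:ℝ)) * dist x y := by ring
  have hg₁N : ∀ x, g₁ x ∈ N := fun x => hPimaps (hmem x)
  have hclose : ∀ x ∈ Sph j, dist (F x) (g₁ x) ≤ δ := by
    intro x hx
    have : g₁ x = Pi' (g₀ x) := rfl
    calc dist (F x) (g₁ x) = dist (Pi' (F x)) (Pi' (g₀ x)) := by
          rw [hPiid (hFN x)]; rfl
      _ ≤ (K:ℝ) * dist (F x) (g₀ x) := hPilip.dist_le_mul _ (hFmem x) _ (hmem x)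
      _ ≤ (K:ℝ) * ε := by
          apply mul_le_mul_of_nonneg_left _ (NNReal.coe_nonneg K)
          rw [dist_comm]; exact hg₀F x
      _ ≤ δ := hKε
  obtain ⟨G, hGlip, hGN, hGeq⟩ := blend hδ hPilip hPimaps hPiid α
    (Real.toNNReal ((K:ℝ) * (L₀:ℝ))) g₁ (lipOfReal hg₁lip) hg₁N F (fun x _ => hFN x) hFlip hclose
  exact ⟨_, G, hGlip, hGN, hGeq⟩

end ExistsExt

/-- Lipschitz filling: if `N ⊆ ℝ^ν` is compact and admits a Lipschitz neighbourhood
retraction, then for every `α > 0` there is `β > 0` such that every continuous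
`F : Q^j → N` whose restriction to `∂Q^j` is `α`-Lipschitz admits a `β`-Lipschitz map
`G : Q^j → N` agreeing with `F` on `∂Q^j`. -/
theorem stmt5 {ν : ℕ} (N : Set (EuclideanSpace ℝ (Fin ν))) (hN : IsCompact N)
    (δ : ℝ) (hδ : 0 < δ) (Pi' : EuclideanSpace ℝ (Fin ν) → EuclideanSpace ℝ (Fin ν))
    (K : ℝ≥0) (hPilip : LipschitzOnWith K Pi' {y | Metric.infDist y N ≤ δ})
    (hPimaps : Set.MapsTo Pi' {y | Metric.infDist y N ≤ δ} N)
    (hPiid : Set.EqOn Pi' id N)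
    (j : ℕ) (hj : 1 ≤ j) :
    ∀ α : ℝ≥0, 0 < α → ∃ β : ℝ≥0, 0 < β ∧
      ∀ F : {x : EuclideanSpace ℝ (Fin j) // supNorm x ≤ 1} → EuclideanSpace ℝ (Fin ν),
        Continuous F → (∀ x, F x ∈ N) →
        LipschitzOnWith α F
          {x : {x : EuclideanSpace ℝ (Fin j) // supNorm x ≤ 1} |
            supNorm (x : EuclideanSpace ℝ (Fin j)) = 1} →
        ∃ G : {x : EuclideanSpace ℝ (Fin j) // supNorm x ≤ 1} → EuclideanSpace ℝ (Fin ν),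
          LipschitzWith β G ∧ (∀ x, G x ∈ N) ∧
          Set.EqOn G F
            {x : {x : EuclideanSpace ℝ (Fin j) // supNorm x ≤ 1} |
              supNorm (x : EuclideanSpace ℝ (Fin j)) = 1} := by
  classical
  intro α hα
  -- the scale of the nets
  set η : ℝ := δ / (2 * (α:ℝ) + 2) with hη
  have hη0 : 0 < η := by positivity
  -- net in the sphere
  obtain ⟨t, hts, htf, htcov⟩ := (isCompact_sph j).finite_cover_balls hη0
  set T : Finset (Cube j) := htf.toFinset with hT
  have hTs : ∀ k : {x // x ∈ T}, (k : Cube j) ∈ Sph j := fun k => hts (htf.mem_toFinset.1 k.2)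
  -- net in N
  obtain ⟨d, hds, hdf, hdcov⟩ := hN.finite_cover_balls hη0
  set D : Finset (EuclideanSpace ℝ (Fin ν)) := hdf.toFinset with hD
  -- patterns
  set E2 : ({x // x ∈ T} → {x // x ∈ D}) → ℝ≥0 → Prop := fun p L =>
    ∃ g : Cube j → EuclideanSpace ℝ (Fin ν),
      LipschitzWith L g ∧ (∀ x, g x ∈ N) ∧ LipschitzOnWith α g (Sph j) ∧
      ∀ k : {x // x ∈ T}, dist (g (k : Cube j)) ((p k : EuclideanSpace ℝ (Fin ν))) ≤ η with hE2
  set E' : ({x // x ∈ T} → {x // x ∈ D}) → Prop := fun p => ∃ L, E2 p L with hE'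
  set Lsel : ({x // x ∈ T} → {x // x ∈ D}) → ℝ≥0 :=
    fun p => if hp : E' p then hp.choose else 0 with hLsel
  set Lmax : ℝ≥0 := Finset.univ.sup Lsel with hLmax
  set β : ℝ≥0 := Real.toNNReal
    ((K:ℝ) * ((Lmax:ℝ) + (2*δ + ((α:ℝ)+(Lmax:ℝ)) * (2 + 4*((j:ℝ)+1))))) + 1 with hβ
  refine ⟨β, ?_, ?_⟩
  · exact lt_of_lt_of_le one_pos le_add_self
  intro F hFc hFN hFlip
  -- pattern of F
  have hp : ∀ k : {x // x ∈ T}, ∃ e : {x // x ∈ D}, dist (F (k : Cube j)) (e : EuclideanSpace ℝ (Fin ν)) ≤ η := by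
    intro k
    have := hdcov (hFN (k : Cube j))
    simp only [Set.mem_iUnion] at this
    obtain ⟨e, he, hee⟩ := this
    exact ⟨⟨e, hdf.mem_toFinset.2 he⟩, le_of_lt (by simpa [Metric.mem_ball] using hee)⟩
  set p : {x // x ∈ T} → {x // x ∈ D} := fun k => (hp k).choose with hpdef
  have hpp : ∀ k : {x // x ∈ T}, dist (F (k : Cube j)) ((p k : EuclideanSpace ℝ (Fin ν))) ≤ η :=
    fun k => (hp k).choose_spec
  -- E' p holds, using F itself and the extension lemma
  have hEp : E' p := by
    obtain ⟨L, g, hgl, hgN, hgeq⟩ := exists_lip_ext hN hδ hPilip hPimaps hPiid α F hFc hFN hFlip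
    refine ⟨L, g, hgl, hgN, ?_, ?_⟩
    · apply LipschitzOnWith.of_dist_le_mul
      intro x hx y hy
      rw [hgeq hx, hgeq hy]
      exact hFlip.dist_le_mul x hx y hy
    · intro k
      rw [hgeq (hTs k)]
      exact hpp k
  -- the canonical witness for pattern p
  have hE2p : E2 p (Lsel p) := by
    have : Lsel p = hEp.choose := by rw [hLsel]; simp only [dif_pos hEp]
    rw [this]
    exact hEp.choose_spec
  obtain ⟨g, hglip, hgN, hgα, hgpat⟩ := hE2p
  have hLle : Lsel p ≤ Lmax := Finset.le_sup (Finset.mem_univ p)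
  -- F and g are δ-close on the sphere
  have hclose : ∀ x ∈ Sph j, dist (F x) (g x) ≤ δ := by
    intro x hx
    have := htcov hx
    simp only [Set.mem_iUnion] at this
    obtain ⟨k, hk, hxk⟩ := this
    have hkT : k ∈ T := htf.mem_toFinset.2 hk
    have hxk' : dist x k ≤ η := le_of_lt (by simpa [Metric.mem_ball] using hxk)
    have hkS : k ∈ Sph j := hts hk
    have h1 : dist (F x) (F k) ≤ (α:ℝ) * η := by
      calc dist (F x) (F k) ≤ (α:ℝ) * dist x k := hFlip.dist_le_mul x hx k hkS
        _ ≤ (α:ℝ) * η := mul_le_mul_of_nonneg_left hxk' (NNReal.coe_nonneg α)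
    have h2 : dist (F k) ((p ⟨k, hkT⟩ : EuclideanSpace ℝ (Fin ν))) ≤ η := hpp ⟨k, hkT⟩
    have h3 : dist ((p ⟨k, hkT⟩ : EuclideanSpace ℝ (Fin ν))) (g k) ≤ η := by
      rw [dist_comm]; exact hgpat ⟨k, hkT⟩
    have h4 : dist (g k) (g x) ≤ (α:ℝ) * η := by
      calc dist (g k) (g x) ≤ (α:ℝ) * dist k x := hgα.dist_le_mul k hkS x hx
        _ ≤ (α:ℝ) * η := mul_le_mul_of_nonneg_left (by rwa [dist_comm]) (NNReal.coe_nonneg α)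
    have hsum : (α:ℝ) * η + (η + η) + (α:ℝ) * η = δ := by
      rw [hη]; field_simp; ring
    calc dist (F x) (g x)
        ≤ dist (F x) (F k) + dist (F k) (g k) + dist (g k) (g x) := dist_triangle4 _ _ _ _
      _ ≤ (α:ℝ) * η + (η + η) + (α:ℝ) * η := by
            refine add_le_add (add_le_add h1 ?_) h4
            exact le_trans (dist_triangle _ ((p ⟨k, hkT⟩ : EuclideanSpace ℝ (Fin ν))) _)
              (add_le_add h2 h3)
      _ = δ := hsum
  -- blend
  obtain ⟨G, hGlip, hGN, hGeq⟩ := blend hδ hPilip hPimaps hPiid α (Lsel p) g hglip hgN F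
    (fun x _ => hFN x) hFlip hclose
  refine ⟨G, ?_, hGN, hGeq⟩
  apply hGlip.weaken
  rw [hβ]
  apply le_trans _ le_self_add
  apply Real.toNNReal_mono
  have h1 : (Lsel p : ℝ) ≤ (Lmax : ℝ) := NNReal.coe_le_coe.2 hLle
  have h2 : (0:ℝ) ≤ 2 + 4*((j:ℝ)+1) := by positivity
  apply mul_le_mul_of_nonneg_left _ (NNReal.coe_nonneg K)
  nlinarith [NNReal.coe_nonneg α]
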